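/- Let A = U·diag(μ)·(V·diag(ν))† with U·V† = Iₙ and suppose the products λ_k := μ_k·conj(ν_k) are pairwise distinct. Then for all indices i, j, the vector u_i ∘ v̄_j (entrywise product of the i-th row of U and the conjugate i-th row of V) equals Vandermonde(λ)⁻¹ applied to the vector ( [A⁰]_{ij}, [A¹]_{ij}, …, [A^{n−1}]_{ij} ), where Vandermonde(λ) is the matrix with (r,c)-entry λ_c^r. -/
import Mathlib


open Matrix BigOperators

/-- If A = U·diag(μ)·(V·diag(ν))†, U·V† = Iₙ, and the products λ_k = μ_k conj(ν_k)
are pairwise distinct, then for all i, j the vector u_i ∘ v̄_j equals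
Vandermonde(λ)⁻¹ applied to ([A⁰]_{ij}, …, [A^{n−1}]_{ij}), where
[Vandermonde(λ)]_{r,c} = λ_c^r. -/
theorem stmt_4 (n : ℕ) (U V : Matrix (Fin n) (Fin n) ℂ) (μ ν : Fin n → ℂ)
    (hUV : U * Vᴴ = 1) (A : Matrix (Fin n) (Fin n) ℂ)
    (hA : A = U * Matrix.diagonal μ * (V * Matrix.diagonal ν)ᴴ)
    (l : Fin n → ℂ) (hl : ∀ k, l k = μ k * star (ν k))
    (hdist : Function.Injective l) (i j : Fin n) :
    (fun k => U i k * star (V j k))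
      = (Matrix.of fun r c : Fin n => l c ^ (r : ℕ))⁻¹.mulVec
          (fun r : Fin n => (A ^ (r : ℕ)) i j) := by
  have hVU : Vᴴ * U = 1 := mul_eq_one_comm.mp hUV
  -- A = U * diagonal l * Vᴴ
  have key : ∀ X Y : Matrix (Fin n) (Fin n) ℂ,
      (U * X * Vᴴ) * (U * Y * Vᴴ) = U * (X * Y) * Vᴴ := by
    intro X Y
    calc (U * X * Vᴴ) * (U * Y * Vᴴ) = U * X * (Vᴴ * U) * (Y * Vᴴ) := by
          simp only [Matrix.mul_assoc]
      _ = U * (X * Y) * Vᴴ := by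
          rw [hVU]; simp only [Matrix.mul_one, Matrix.mul_assoc]
  have hA' : A = U * Matrix.diagonal l * Vᴴ := by
    have hd : Matrix.diagonal μ * Matrix.diagonal (star ν) = Matrix.diagonal l := by
      rw [Matrix.diagonal_mul_diagonal]
      exact congrArg Matrix.diagonal (funext fun k => (hl k).symm)
    rw [hA, Matrix.conjTranspose_mul, Matrix.diagonal_conjTranspose,
      Matrix.mul_assoc, ← Matrix.mul_assoc (Matrix.diagonal μ), hd, ← Matrix.mul_assoc]
  have hpow : ∀ r : ℕ, A ^ r = U * Matrix.diagonal (fun k => l k ^ r) * Vᴴ := by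
    intro r
    induction r with
    | zero => simp [hUV]
    | succ r ih =>
      rw [pow_succ, ih, hA', key, Matrix.diagonal_mul_diagonal]
      exact congrArg (fun D => U * Matrix.diagonal D * Vᴴ)
        (funext fun k => (pow_succ (l k) r).symm)
  set M : Matrix (Fin n) (Fin n) ℂ := Matrix.of fun r c : Fin n => l c ^ (r : ℕ) with hM
  have hMdet : IsUnit M.det := by
    have : M = (Matrix.vandermonde l)ᵀ := by
      ext r c
      simp [hM, Matrix.vandermonde]
    rw [this, Matrix.det_transpose]
    exact isUnit_iff_ne_zero.mpr (Matrix.det_vandermonde_ne_zero_iff.mpr hdist)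
  have hmv : M.mulVec (fun k => U i k * star (V j k))
      = fun r : Fin n => (A ^ (r : ℕ)) i j := by
    ext r
    rw [hpow r]
    simp only [Matrix.mulVec, dotProduct, hM, Matrix.of_apply]
    rw [Matrix.mul_apply]
    apply Finset.sum_congr rfl
    intro k _
    rw [Matrix.mul_diagonal, Matrix.conjTranspose_apply]
    ring
  rw [← hmv, Matrix.mulVec_mulVec, Matrix.nonsing_inv_mul M hMdet, Matrix.one_mulVec]
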